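/- Let G be a finite soluble group that is not nilpotent. If every cyclic subgroup of prime-power order of G is either 𝔑-subnormal in G or 𝔑-abnormal in G, then there exist a prime p and an element x of G such that the cyclic subgroup ⟨x⟩ is a Sylow p-subgroup of G, ⟨x⟩ is 𝔑-abnormal in G, G = G′ ⋊ ⟨x⟩ (i.e. G′⟨x⟩ = G and G′ ∩ ⟨x⟩ = 1), the derived subgroup G′ equals the nilpotent residual G^𝔑 of G, and the subgroup G′⟨x^p⟩ is nilpotent. -/

import Mathlib

variable {G : Type*}

/-- `K` is a maximal subgroup of `L`: `K < L` and there is no subgroup strictly between. -/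
def IsMaximalSubgroupOf [Group G] (K L : Subgroup G) : Prop :=
  K < L ∧ ∀ M : Subgroup G, K < M → M ≤ L → M = L

/-- The quotient of `L` by the normal core of `K` in `L` is nilpotent. -/
def NilpotentQuotByCore [Group G] (K L : Subgroup G) : Prop :=
  Group.IsNilpotent (↥L ⧸ (K.subgroupOf L).normalCore)

/-- The quotient of `L` by the normal core of `K` in `L` has nilpotent derived subgroup
(i.e. belongs to the formation `𝔑𝔄`). -/
def NAQuotByCore [Group G] (K L : Subgroup G) : Prop :=
  Group.IsNilpotent ↥(commutator (↥L ⧸ (K.subgroupOf L).normalCore))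

/-- `H` is `𝔑`-subnormal in `G`: `H = G` or there is a chain
`H = H₀ <· H₁ <· ... <· Hₙ = G` of maximal subgroups with each `Hᵢ/(Hᵢ₋₁)_{Hᵢ}` nilpotent. -/
def NSubnormal [Group G] (H : Subgroup G) : Prop :=
  H = ⊤ ∨ ∃ (n : ℕ) (c : Fin (n + 1) → Subgroup G),
    c 0 = H ∧ c (Fin.last n) = ⊤ ∧
    ∀ i : Fin n, IsMaximalSubgroupOf (c i.castSucc) (c i.succ) ∧
      NilpotentQuotByCore (c i.castSucc) (c i.succ)

/-- `H` is `𝔑𝔄`-subnormal in `G`: `H = G` or there is a chain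
`H = H₀ <· H₁ <· ... <· Hₙ = G` of maximal subgroups with each `Hᵢ/(Hᵢ₋₁)_{Hᵢ}`
having nilpotent derived subgroup. -/
def NASubnormal [Group G] (H : Subgroup G) : Prop :=
  H = ⊤ ∨ ∃ (n : ℕ) (c : Fin (n + 1) → Subgroup G),
    c 0 = H ∧ c (Fin.last n) = ⊤ ∧
    ∀ i : Fin n, IsMaximalSubgroupOf (c i.castSucc) (c i.succ) ∧
      NAQuotByCore (c i.castSucc) (c i.succ)

/-- `H` is `𝔑`-abnormal in `G`: for all `K`, `L` with `H ≤ K` and `K` maximal in `L`,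
the quotient `L/K_L` is not nilpotent. -/
def NAbnormal [Group G] (H : Subgroup G) : Prop :=
  ∀ K L : Subgroup G, H ≤ K → IsMaximalSubgroupOf K L → ¬ NilpotentQuotByCore K L

/-- `H` is `𝔑𝔄`-abnormal in `G`: for all `K`, `L` with `H ≤ K` and `K` maximal in `L`,
the quotient `L/K_L` does not have nilpotent derived subgroup. -/
def NAAbnormal [Group G] (H : Subgroup G) : Prop :=
  ∀ K L : Subgroup G, H ≤ K → IsMaximalSubgroupOf K L → ¬ NAQuotByCore K L

/-- `N` is the nilpotent residual `G^𝔑` of `G`: the smallest normal subgroup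
with nilpotent quotient. -/
def IsNilpotentResidual [Group G] (N : Subgroup G) : Prop :=
  ∃ hN : N.Normal,
    haveI := hN
    Group.IsNilpotent (G ⧸ N) ∧
      ∀ M : Subgroup G, ∀ hM : M.Normal,
        (haveI := hM; Group.IsNilpotent (G ⧸ M)) → N ≤ M

/-- `N` is the `𝔑𝔄`-residual `G^{𝔑𝔄}` of `G`: the smallest normal subgroup whose
quotient has nilpotent derived subgroup. -/
def IsNAResidual [Group G] (N : Subgroup G) : Prop :=
  ∃ hN : N.Normal,
    haveI := hN
    Group.IsNilpotent ↥(commutator (G ⧸ N)) ∧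
      ∀ M : Subgroup G, ∀ hM : M.Normal,
        (haveI := hM; Group.IsNilpotent ↥(commutator (G ⧸ M))) → N ≤ M

/-- `H` is an `𝔑`-projector of `G`: for every normal `N ⊴ G`, the image `HN/N` is a
maximal nilpotent subgroup of `G/N`. -/
def IsNProjector [Group G] (H : Subgroup G) : Prop :=
  ∀ N : Subgroup G, ∀ hN : N.Normal,
    haveI := hN
    Group.IsNilpotent ↥(H.map (QuotientGroup.mk' N)) ∧
      ∀ K : Subgroup (G ⧸ N), Group.IsNilpotent ↥K →
        H.map (QuotientGroup.mk' N) ≤ K → K = H.map (QuotientGroup.mk' N)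

section Helpers

variable [Group G]

open Subgroup

/-- `H` is contained in `K` and normalized by all of `K`. -/
def NormalIn (H K : Subgroup G) : Prop :=
  H ≤ K ∧ ∀ l ∈ K, ∀ h ∈ H, l * h * l⁻¹ ∈ H

/-- a subnormal chain of length `n` from `H` up to `L`. -/
def SubnChain : ℕ → Subgroup G → Subgroup G → Prop
  | 0, H, L => H = L
  | (n+1), H, L => ∃ K, SubnChain n H K ∧ NormalIn K L

lemma normalIn_refl (K : Subgroup G) : NormalIn K K :=
  ⟨le_rfl, fun l hl h hh => mul_mem (mul_mem hl hh) (inv_mem hl)⟩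

lemma NormalIn.normal_of_top {N : Subgroup G} (h : NormalIn N ⊤) : N.Normal :=
  ⟨fun n hn g => h.2 g trivial n hn⟩

lemma Normal.normalIn_top {N : Subgroup G} (h : N.Normal) : NormalIn N ⊤ :=
  ⟨le_top, fun l _ h' hh => h.conj_mem h' hh l⟩

lemma isCoatom_subgroupOf {K L : Subgroup G} (h : IsMaximalSubgroupOf K L) :
    IsCoatom (K.subgroupOf L) := by
  constructor
  · intro heq
    exact absurd (Subgroup.subgroupOf_eq_top.1 heq) (not_le_of_gt h.1)
  · intro M' hM'
    have hKM : K < M'.map L.subtype := by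
      have : (K.subgroupOf L).map L.subtype ≤ M'.map L.subtype := Subgroup.map_mono hM'.le
      rw [Subgroup.subgroupOf_map_subtype, inf_eq_left.2 h.1.le] at this
      refine lt_of_le_of_ne this (fun heq => ?_)
      apply hM'.ne
      apply Subgroup.map_injective L.subtype_injective
      rw [← heq, Subgroup.subgroupOf_map_subtype, inf_eq_left.2 h.1.le]
    have := h.2 _ hKM (Subgroup.map_subtype_le M')
    apply Subgroup.map_injective L.subtype_injective
    rw [this, ← MonoidHom.range_eq_map, Subgroup.range_subtype]

/-- In a finite group, a coatom whose quotient by its normal core is nilpotent is normal. -/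
lemma normal_of_coatom_nilp {H : Type*} [Group H] [Finite H] {K : Subgroup H}
    (hco : IsCoatom K) (hnil : Group.IsNilpotent (H ⧸ K.normalCore)) : K.Normal := by
  set C := K.normalCore with hC
  set φ := QuotientGroup.mk' C with hφ
  have hker : φ.ker = C := QuotientGroup.ker_mk' C
  have hCK : C ≤ K := K.normalCore_le
  have hcomap : Subgroup.comap φ (Subgroup.map φ K) = K := by
    rw [Subgroup.comap_map_eq, hker, sup_eq_left.2 hCK]
  have hsurj : Function.Surjective φ := QuotientGroup.mk'_surjective C
  have hco' : IsCoatom (Subgroup.map φ K) := by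
    constructor
    · intro heq
      apply hco.1
      rw [← hcomap, heq, Subgroup.comap_top]
    · intro M'' hM''
      have h1 : K ≤ Subgroup.comap φ M'' :=
        le_trans (le_of_eq hcomap.symm) (Subgroup.comap_mono hM''.le)
      have h2 : K < Subgroup.comap φ M'' := by
        refine lt_of_le_of_ne h1 (fun heq => hM''.ne ?_)
        rw [← Subgroup.map_comap_eq_self_of_surjective hsurj M'', ← heq]
      have := hco.2 _ h2
      rw [← Subgroup.map_comap_eq_self_of_surjective hsurj M'', this,
        Subgroup.map_top_of_surjective _ hsurj]
  have h3 : ∀ K' : Subgroup (H ⧸ C), IsCoatom K' → K'.Normal := by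
    have := (isNilpotent_of_finite_tfae (G := H ⧸ C)).out 0 2
    exact this.mp hnil
  have hnorm : (Subgroup.map φ K).Normal := h3 _ hco'
  have := hnorm.comap φ
  rwa [hcomap] at this

lemma normalIn_of_max [Finite G] {K L : Subgroup G} (hmax : IsMaximalSubgroupOf K L)
    (hq : NilpotentQuotByCore K L) : NormalIn K L := by
  have hnorm : (K.subgroupOf L).Normal := normal_of_coatom_nilp (isCoatom_subgroupOf hmax) hq
  refine ⟨hmax.1.le, fun l hl k hk => ?_⟩
  have := hnorm.conj_mem ⟨k, hmax.1.le hk⟩ (Subgroup.mem_subgroupOf.2 hk) ⟨l, hl⟩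
  exact Subgroup.mem_subgroupOf.1 this

lemma subnChain_of_chain [Finite G] : ∀ (n : ℕ) (c : Fin (n + 1) → Subgroup G),
    (∀ i : Fin n, IsMaximalSubgroupOf (c i.castSucc) (c i.succ) ∧
      NilpotentQuotByCore (c i.castSucc) (c i.succ)) →
    SubnChain n (c 0) (c (Fin.last n)) := by
  intro n
  induction n with
  | zero => intro c _; rfl
  | succ n ih =>
    intro c hc
    refine ⟨c (Fin.last n).castSucc, ?_, ?_⟩
    · have := ih (fun i : Fin (n+1) => c i.castSucc) (fun i => by
        have h := hc i.castSucc
        rwa [Fin.succ_castSucc] at h)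
      simpa using this
    · have h := hc (Fin.last n)
      rw [Fin.succ_last] at h
      exact normalIn_of_max h.1 h.2

end Helpers


section Helpers2

variable [Group G]

open Subgroup

lemma conj_mem_of_normalIn {N K : Subgroup G} (h : NormalIn N K) {l : G} (hl : l ∈ K) :
    N.map (MulAut.conj l).toMonoidHom ≤ N := by
  rintro _ ⟨n, hn, rfl⟩
  simpa [MulAut.conj_apply] using h.2 l hl n hn

lemma exists_maxNormalPGroup [Finite G] (p : ℕ) [Fact p.Prime] (K : Subgroup G) :
    ∃ N, NormalIn N K ∧ IsPGroup p N ∧ ∀ M, NormalIn M K → IsPGroup p M → M ≤ N := by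
  haveI : Finite (Subgroup G) := Finite.of_injective _ SetLike.coe_injective
  set S : Set (Subgroup G) := {N | NormalIn N K ∧ IsPGroup p N} with hS
  have hbot : (⊥ : Subgroup G) ∈ S := by
    refine ⟨⟨bot_le, fun l _ h hh => ?_⟩, IsPGroup.of_bot⟩
    rw [Subgroup.mem_bot] at hh ⊢
    simp [hh]
  obtain ⟨N, hNS, hmax⟩ := Set.Finite.exists_maximalFor id S (Set.toFinite S) ⟨⊥, hbot⟩
  refine ⟨N, hNS.1, hNS.2, fun M hMK hMp => ?_⟩
  have hsupS : M ⊔ N ∈ S := by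
    constructor
    · constructor
      · exact sup_le hMK.1 hNS.1.1
      · intro l hl h hh
        have hmap : (M ⊔ N).map (MulAut.conj l).toMonoidHom ≤ M ⊔ N := by
          rw [Subgroup.map_sup]
          exact sup_le (le_trans (conj_mem_of_normalIn hMK hl) le_sup_left)
            (le_trans (conj_mem_of_normalIn hNS.1 hl) le_sup_right)
        exact hmap ⟨h, hh, by simp [MulAut.conj_apply]⟩
    · refine IsPGroup.to_sup_of_normal_right' hMp hNS.2 ?_
      intro m hm
      exact Subgroup.mem_normalizer_fintype (fun n hn => hNS.1.2 m (hMK.1 hm) n hn)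
  have : id N = id (M ⊔ N) := le_antisymm (le_sup_right : id N ≤ M ⊔ N) (hmax hsupS (le_sup_right : id N ≤ M ⊔ N))
  rw [id_eq, id_eq] at this
  rw [this]
  exact le_sup_left

lemma subnChain_pgroup [Finite G] {p : ℕ} [Fact p.Prime] :
    ∀ (n : ℕ) (H L : Subgroup G), SubnChain n H L → IsPGroup p H →
      ∃ N, NormalIn N L ∧ IsPGroup p N ∧ H ≤ N := by
  intro n
  induction n with
  | zero =>
    intro H L hc hp
    exact ⟨H, hc ▸ normalIn_refl H, hp, le_rfl⟩
  | succ n ih =>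
    rintro H L ⟨K, hchain, hKL⟩ hp
    obtain ⟨N0, hN0K, hN0p, hHN0⟩ := ih H K hchain hp
    obtain ⟨Nm, hNmK, hNmp, hNmmax⟩ := exists_maxNormalPGroup p K
    have hHNm : H ≤ Nm := le_trans hHN0 (hNmmax _ hN0K hN0p)
    refine ⟨Nm, ⟨le_trans hNmK.1 hKL.1, fun l hl h hh => ?_⟩, hNmp, hHNm⟩
    -- conjugate of Nm by l is again in the family for K
    have hconj : Nm.map (MulAut.conj l).toMonoidHom ≤ Nm := by
      apply hNmmax
      · constructor
        · rintro _ ⟨n', hn', rfl⟩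
          simpa [MulAut.conj_apply] using hKL.2 l hl n' (hNmK.1 hn')
        · rintro k hk _ ⟨n', hn', rfl⟩
          have hk' : l⁻¹ * k * l ∈ K := by
            have := hKL.2 l⁻¹ (inv_mem hl) k hk
            simpa using this
          refine ⟨(l⁻¹ * k * l) * n' * (l⁻¹ * k * l)⁻¹, hNmK.2 _ hk' n' hn', ?_⟩
          simp only [MulAut.conj_apply, MulEquiv.coe_toMonoidHom]
          group
      · exact hNmp.map _
    simpa [MulAut.conj_apply] using hconj ⟨h, hh, rfl⟩

/-- Nilpotency criterion: a normal subgroup all of whose primary cyclic subgroups are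
subnormal in `G` is nilpotent. -/
lemma crit [Finite G] (M : Subgroup G) (hMn : M.Normal)
    (hy : ∀ y : G, y ∈ M → (∃ q k : ℕ, q.Prime ∧ orderOf y = q ^ k) →
      ∃ n, SubnChain n (Subgroup.zpowers y) ⊤) :
    Group.IsNilpotent ↥M := by
  have htfae := (isNilpotent_of_finite_tfae (G := ↥M)).out 3 0
  apply htfae.mp
  intro p hp P
  haveI := hp
  obtain ⟨N, hNT, hNp, hNmax⟩ := exists_maxNormalPGroup p (⊤ : Subgroup G)
  have hPN : (P : Subgroup ↥M).map M.subtype ≤ N := by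
    intro g hg
    obtain ⟨y, hy', rfl⟩ := hg
    have hgM : (y : G) ∈ M := y.2
    obtain ⟨k0, hk0⟩ := P.isPGroup' ⟨y, hy'⟩
    have hord : orderOf (M.subtype y) ∣ p ^ k0 := by
      apply orderOf_dvd_of_pow_eq_one
      have h1 : (y : ↥M) ^ p ^ k0 = 1 := by
        have := congrArg (fun z : ↥(P : Subgroup ↥M) => (z : ↥M)) hk0
        simpa using this
      show (y : G) ^ p ^ k0 = 1
      exact_mod_cast h1
    obtain ⟨j, _, hj⟩ := (Nat.dvd_prime_pow hp.out).mp hord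
    obtain ⟨n, hchain⟩ := hy (M.subtype y) hgM ⟨p, j, hp.out, hj⟩
    have hyp : IsPGroup p (Subgroup.zpowers (M.subtype y)) :=
      IsPGroup.of_card (by rw [Nat.card_zpowers, hj])
    obtain ⟨Ny, hNyT, hNyp, hle⟩ := subnChain_pgroup n _ _ hchain hyp
    exact hNmax _ hNyT hNyp (hle (Subgroup.mem_zpowers _))
  have hNnormal : N.Normal := hNT.normal_of_top
  set X := N ⊓ M with hX
  have hXnormal : X.Normal := inferInstance
  have hXp : IsPGroup p X := hNp.to_inf_left
  have hXM : X ≤ M := inf_le_right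
  have hQp : IsPGroup p (X.subgroupOf M) :=
    hXp.of_equiv (Subgroup.subgroupOfEquivOfLe hXM).symm
  have hPQ : (P : Subgroup ↥M) ≤ X.subgroupOf M := by
    intro y hy'
    rw [Subgroup.mem_subgroupOf]
    exact ⟨hPN ⟨y, hy', rfl⟩, y.2⟩
  have heq : X.subgroupOf M = P := P.is_maximal' hQp hPQ
  rw [← heq]
  infer_instance

end Helpers2


section Helpers3

variable [Group G]

open Subgroup

open scoped commutatorElement

lemma nilpQuotByCore_top {M K : Subgroup G} (hMK : M ≤ K) (hM : M.Normal)
    (hq : Group.IsNilpotent (G ⧸ M)) : NilpotentQuotByCore K ⊤ := by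
  haveI := hM
  have hmap : (M.subgroupOf ⊤).map (Subgroup.topEquiv : ↥(⊤ : Subgroup G) ≃* G).toMonoidHom = M := by
    ext g
    constructor
    · rintro ⟨x, hx, rfl⟩
      exact Subgroup.mem_subgroupOf.1 hx
    · intro hg
      exact ⟨⟨g, trivial⟩, Subgroup.mem_subgroupOf.2 hg, rfl⟩
  haveI hnormal : (M.subgroupOf (⊤ : Subgroup G)).Normal := Subgroup.normal_subgroupOf
  have e : ↥(⊤ : Subgroup G) ⧸ (M.subgroupOf ⊤) ≃* G ⧸ M :=
    QuotientGroup.congr _ _ Subgroup.topEquiv hmap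
  haveI h1 : Group.IsNilpotent (↥(⊤ : Subgroup G) ⧸ (M.subgroupOf ⊤)) := by
    haveI := hq
    exact nilpotent_of_mulEquiv e.symm
  have hle : M.subgroupOf (⊤ : Subgroup G) ≤ (K.subgroupOf ⊤).normalCore :=
    Subgroup.normal_le_normalCore.mpr (Subgroup.comap_mono hMK)
  have hsurj : Function.Surjective
      (QuotientGroup.map (M.subgroupOf ⊤) ((K.subgroupOf ⊤).normalCore) (MonoidHom.id _) hle) := by
    intro q
    obtain ⟨g, rfl⟩ := QuotientGroup.mk'_surjective _ q
    exact ⟨QuotientGroup.mk g, rfl⟩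
  exact nilpotent_of_surjective _ hsurj

lemma NAbnormal.sup_eq_top [Finite G] {H : Subgroup G} (hab : NAbnormal H)
    {M : Subgroup G} (hM : M.Normal) (hq : Group.IsNilpotent (G ⧸ M)) : H ⊔ M = ⊤ := by
  by_contra hne
  haveI : Finite (Subgroup G) := Finite.of_injective _ SetLike.coe_injective
  set S : Set (Subgroup G) := {K | H ⊔ M ≤ K ∧ K ≠ ⊤} with hS
  obtain ⟨K, ⟨hK1, hK2⟩, hmax⟩ :=
    Set.Finite.exists_maximalFor id S (Set.toFinite S) ⟨H ⊔ M, le_rfl, hne⟩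
  have hmaxsub : IsMaximalSubgroupOf K ⊤ := by
    refine ⟨lt_top_iff_ne_top.2 hK2, fun M' hlt _ => ?_⟩
    by_contra hMne
    have := le_antisymm hlt.le (hmax (j := M') ⟨le_trans hK1 hlt.le, hMne⟩ hlt.le)
    exact hlt.ne (by simpa using this)
  exact hab K ⊤ (le_trans le_sup_left hK1) hmaxsub
    (nilpQuotByCore_top (le_trans le_sup_right hK1) hM hq)

lemma zpowers_image_top {x : G} {M : Subgroup G} (hM : M.Normal)
    (hsup : Subgroup.zpowers x ⊔ M = ⊤) :
    Subgroup.zpowers ((QuotientGroup.mk' M) x) = ⊤ := by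
  haveI := hM
  have h1 : Subgroup.map (QuotientGroup.mk' M) (Subgroup.zpowers x ⊔ M) = ⊤ := by
    rw [hsup]
    exact Subgroup.map_top_of_surjective _ (QuotientGroup.mk'_surjective M)
  rw [Subgroup.map_sup, MonoidHom.map_zpowers] at h1
  have h2 : Subgroup.map (QuotientGroup.mk' M) M = ⊥ := by
    rw [eq_bot_iff]
    rintro _ ⟨m, hm, rfl⟩
    simp only [Subgroup.mem_bot]
    rw [← MonoidHom.mem_ker, QuotientGroup.ker_mk']
    exact hm
  rwa [h2, sup_bot_eq] at h1

lemma NAbnormal.commutator_le [Finite G] {x : G} (hab : NAbnormal (Subgroup.zpowers x))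
    {M : Subgroup G} (hM : M.Normal) (hq : Group.IsNilpotent (G ⧸ M)) : commutator G ≤ M := by
  haveI := hM
  have hsup := hab.sup_eq_top hM hq
  have hgen := zpowers_image_top hM hsup
  haveI : IsCyclic (G ⧸ M) := ⟨⟨(QuotientGroup.mk' M) x, fun a => by
    have : a ∈ Subgroup.zpowers ((QuotientGroup.mk' M) x) := by rw [hgen]; trivial
    exact this⟩⟩
  letI := IsCyclic.commGroup (α := G ⧸ M)
  have := Abelianization.commutator_subset_ker (QuotientGroup.mk' M)
  rwa [QuotientGroup.ker_mk'] at this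

lemma quot_nilpotent_of_commutator_le {M : Subgroup G} (hM : M.Normal)
    (h : commutator G ≤ M) : Group.IsNilpotent (G ⧸ M) := by
  haveI := hM
  letI : CommGroup (G ⧸ M) :=
    { (inferInstance : Group (G ⧸ M)) with
      mul_comm := fun a b => by
        induction a using QuotientGroup.induction_on with
        | H g =>
        induction b using QuotientGroup.induction_on with
        | H k =>
        rw [← QuotientGroup.mk_mul, ← QuotientGroup.mk_mul, QuotientGroup.eq]
        have hmem : ⁅k⁻¹, g⁻¹⁆ ∈ commutator G := by
          rw [_root_.commutator_def]
          exact Subgroup.commutator_mem_commutator (Subgroup.mem_top _) (Subgroup.mem_top _)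
        have h3 : (g * k)⁻¹ * (k * g) = ⁅k⁻¹, g⁻¹⁆ := by
          rw [commutatorElement_def]
          group
        rw [h3]
        exact h hmem }
  infer_instance

lemma normal_of_commutator_le {M : Subgroup G} (h : commutator G ≤ M) : M.Normal := by
  constructor
  intro n hn g
  have h1 : ⁅g, n⁆ ∈ commutator G := by
    rw [_root_.commutator_def]
    exact Subgroup.commutator_mem_commutator (Subgroup.mem_top _) (Subgroup.mem_top _)
  have h2 : ⁅g, n⁆ * n ∈ M := mul_mem (h h1) hn
  have h3 : ⁅g, n⁆ * n = g * n * g⁻¹ := by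
    rw [commutatorElement_def]
    group
  rwa [h3] at h2

lemma commutator_ne_top [Group.IsSolvable G] [Nontrivial G] : commutator G ≠ ⊤ := by
  intro heq
  have hall : ∀ n, derivedSeries G n = ⊤ := by
    intro n
    induction n with
    | zero => rfl
    | succ n ih => rw [derivedSeries_succ, ih, ← _root_.commutator_def, heq]
  obtain ⟨n, hn⟩ := Group.IsSolvable.solvable (G := G)
  rw [hall n] at hn
  obtain ⟨a, b, hab⟩ := exists_pair_ne G
  apply hab
  have ha : a ∈ (⊥ : Subgroup G) := hn ▸ Subgroup.mem_top a
  have hb : b ∈ (⊥ : Subgroup G) := hn ▸ Subgroup.mem_top b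
  rw [Subgroup.mem_bot] at ha hb
  rw [ha, hb]

end Helpers3


section Helpers4

variable [Group G]

open Subgroup

lemma nilpotent_of_subgroups_trivial {Q : Type*} [Group Q]
    (h : ∀ S : Subgroup Q, S = ⊥ ∨ S = ⊤) : Group.IsNilpotent Q := by
  by_cases hQ : ∀ a : Q, a = 1
  · haveI : Subsingleton Q := ⟨fun a b => by rw [hQ a, hQ b]⟩
    infer_instance
  · push_neg at hQ
    obtain ⟨a, ha⟩ := hQ
    have hz : Subgroup.zpowers a = ⊤ := by
      rcases h (Subgroup.zpowers a) with h1 | h1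
      · exact absurd (Subgroup.zpowers_eq_bot.1 h1) ha
      · exact h1
    haveI : IsCyclic Q := ⟨⟨a, fun b => by
      have : b ∈ Subgroup.zpowers a := by rw [hz]; trivial
      exact this⟩⟩
    letI := IsCyclic.commGroup (α := Q)
    infer_instance

lemma NAbnormal.normalizer_eq [Finite G] {H : Subgroup G} (hab : NAbnormal H) :
    normalizer (H : Set G) = H := by
  by_contra hne
  haveI : Finite (Subgroup G) := Finite.of_injective _ SetLike.coe_injective
  have hlt : H < normalizer (H : Set G) := lt_of_le_of_ne Subgroup.le_normalizer (Ne.symm hne)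
  set S : Set (Subgroup G) := {T | H < T ∧ T ≤ normalizer (H : Set G)} with hS
  obtain ⟨T, ⟨hT1, hT2⟩, hmin⟩ :=
    Set.Finite.exists_minimalFor id S (Set.toFinite S) ⟨normalizer (H : Set G), hlt, le_rfl⟩
  have hmaxsub : IsMaximalSubgroupOf H T :=
    ⟨hT1, fun M hHM hMT => le_antisymm hMT (hmin (j := M) ⟨hHM, hMT.trans hT2⟩ hMT)⟩
  apply hab H T le_rfl hmaxsub
  -- H is normal in T
  haveI hnormal : (H.subgroupOf T).Normal := by
    constructor
    rintro ⟨k, hkT⟩ hk ⟨t, htT⟩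
    rw [Subgroup.mem_subgroupOf] at hk ⊢
    exact ((Subgroup.mem_normalizer_iff.mp (hT2 htT)) k).mp hk
  show Group.IsNilpotent (↥T ⧸ (H.subgroupOf T).normalCore)
  haveI hnilp : Group.IsNilpotent (↥T ⧸ (H.subgroupOf T)) := by
    apply nilpotent_of_subgroups_trivial
    intro S'
    set φ := QuotientGroup.mk' (H.subgroupOf T) with hφ
    have hker : φ.ker = H.subgroupOf T := QuotientGroup.ker_mk' _
    set D₀ := Subgroup.comap φ S' with hD₀
    have hkerD : H.subgroupOf T ≤ D₀ := hker ▸ fun d hd => by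
      have : φ d = 1 := hd
      show φ d ∈ S'
      rw [this]; exact one_mem S'
    have hHD : H ≤ D₀.map T.subtype := by
      intro g hg
      exact ⟨⟨g, hmaxsub.1.le hg⟩, hkerD (Subgroup.mem_subgroupOf.2 hg), rfl⟩
    by_cases hD : D₀.map T.subtype = H
    · left
      have hD₀K : D₀ = H.subgroupOf T := by
        refine le_antisymm (fun d hd => ?_) hkerD
        rw [Subgroup.mem_subgroupOf]
        rw [← hD]
        exact ⟨d, hd, rfl⟩
      rw [eq_bot_iff, ← Subgroup.map_comap_eq_self_of_surjective (QuotientGroup.mk'_surjective _) S']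
      rw [← hφ, ← hD₀, hD₀K]
      rintro _ ⟨d, hd, rfl⟩
      rw [Subgroup.mem_bot]
      exact (QuotientGroup.eq_one_iff d).mpr hd
    · right
      have hlt' : H < D₀.map T.subtype := lt_of_le_of_ne hHD (Ne.symm hD)
      have := hmaxsub.2 _ hlt' (Subgroup.map_subtype_le D₀)
      have hD₀top : D₀ = ⊤ := by
        apply Subgroup.map_injective T.subtype_injective
        rw [this, ← MonoidHom.range_eq_map, Subgroup.range_subtype]
      rw [← Subgroup.map_comap_eq_self_of_surjective (QuotientGroup.mk'_surjective _) S',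
        ← hφ, ← hD₀, hD₀top]
      exact Subgroup.map_top_of_surjective _ (QuotientGroup.mk'_surjective _)
  exact nilpotent_of_mulEquiv
    (QuotientGroup.quotientMulEquivOfEq ((Subgroup.normalCore_eq_self _).symm))

lemma NAbnormal.sylow [Finite G] {x : G} {p k : ℕ} (hp : p.Prime) (hord : orderOf x = p ^ k)
    (hab : NAbnormal (Subgroup.zpowers x)) : ∃ P : Sylow p G, (P : Subgroup G) = Subgroup.zpowers x := by
  haveI := Fact.mk hp
  have hpg : IsPGroup p (Subgroup.zpowers x) :=
    IsPGroup.of_card (by rw [Nat.card_zpowers, hord])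
  obtain ⟨P, hle⟩ := hpg.exists_le_sylow
  refine ⟨P, ?_⟩
  by_contra hne
  have hlt : Subgroup.zpowers x < P := lt_of_le_of_ne hle (fun heq => hne heq.symm)
  set H' := (Subgroup.zpowers x).subgroupOf (P : Subgroup G) with hH'
  have h'top : H' ≠ ⊤ := by
    intro heq
    exact absurd (Subgroup.subgroupOf_eq_top.1 heq) (not_le_of_gt hlt)
  haveI : Group.IsNilpotent ↥(P : Subgroup G) := P.isPGroup'.isNilpotent
  have hNC : NormalizerCondition ↥(P : Subgroup G) := normalizerCondition_of_isNilpotent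
  have hlt' : H' < normalizer (H' : Set ↥(P : Subgroup G)) := hNC H' (lt_top_iff_ne_top.2 h'top)
  obtain ⟨t, htN, htH⟩ := SetLike.exists_of_lt hlt'
  have htG : (t : G) ∈ normalizer ((Subgroup.zpowers x : Subgroup G) : Set G) := by
    apply Subgroup.mem_normalizer_fintype
    intro n hn
    have hnP : n ∈ (P : Subgroup G) := hle hn
    have : t * ⟨n, hnP⟩ * t⁻¹ ∈ H' := by
      rw [Subgroup.mem_normalizer_iff] at htN
      exact (htN ⟨n, hnP⟩).mp (Subgroup.mem_subgroupOf.2 hn)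
    exact Subgroup.mem_subgroupOf.1 this
  rw [hab.normalizer_eq] at htG
  exact htH (Subgroup.mem_subgroupOf.2 htG)

end Helpers4


section Helpers5

lemma isPGroup_pi {p : ℕ} {ι : Type*} [Finite ι] {f : ι → Type*} [∀ i, Group (f i)]
    (h : ∀ i, IsPGroup p (f i)) : IsPGroup p (∀ i, f i) := by
  haveI := Fintype.ofFinite ι
  intro g
  have hch : ∀ i, ∃ k, (g i) ^ p ^ k = 1 := fun i => h i (g i)
  choose k hk using hch
  refine ⟨Finset.univ.sup k, ?_⟩
  funext i
  have hle : k i ≤ Finset.univ.sup k := Finset.le_sup (Finset.mem_univ i)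
  have : p ^ Finset.univ.sup k = p ^ k i * p ^ (Finset.univ.sup k - k i) := by
    rw [← pow_add, Nat.add_sub_cancel' hle]
  calc (g ^ p ^ Finset.univ.sup k) i = (g i) ^ p ^ Finset.univ.sup k := by simp [Pi.pow_apply]
    _ = ((g i) ^ p ^ k i) ^ p ^ (Finset.univ.sup k - k i) := by rw [this, pow_mul]
    _ = 1 := by rw [hk i, one_pow]

set_option maxHeartbeats 1000000 in
lemma exists_pprime_part (N : Type*) [Group N] [Finite N] (p : ℕ) (hp : p.Prime)
    (hnil : Group.IsNilpotent N) :
    ∃ W : Subgroup N, ∃ _ : W.Normal, (∀ w : N, w ∈ W ↔ ¬ p ∣ orderOf w) ∧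
      IsPGroup p (N ⧸ W) := by
  haveI := Fact.mk hp
  by_cases hpN : p ∣ Nat.card N
  · have hmem : p ∈ (Nat.card N).primeFactors :=
      Nat.mem_primeFactors.mpr ⟨hp, hpN, Nat.card_pos.ne'⟩
    have htfae := (isNilpotent_of_finite_tfae (G := N)).out 0 4
    obtain ⟨e⟩ := htfae.mp hnil
    set ev := Pi.evalMonoidHom
      (fun q : (Nat.card N).primeFactors => ∀ P : Sylow (q : ℕ) N, ↥(P : Subgroup N))
      (⟨p, hmem⟩ : (Nat.card N).primeFactors) with hev
    set φ := ev.comp e.symm.toMonoidHom with hφ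
    have htarget : IsPGroup p (∀ P : Sylow p N, ↥(P : Subgroup N)) :=
      isPGroup_pi (fun P => P.isPGroup')
    refine ⟨φ.ker, inferInstance, ?_, ?_⟩
    · intro w
      constructor
      · intro hw hdvd
        -- w in kernel: p-coordinate of f := e.symm w is 1; show ¬ p ∣ orderOf w
        set f := e.symm w with hf
        have hordf : orderOf f = orderOf w := orderOf_injective e.symm.toMonoidHom e.symm.injective w
        set n := orderOf w with hn
        have hn0 : n ≠ 0 := (orderOf_pos w).ne'
        set u := f ^ (n / p) with hu
        have hordu : orderOf u = p := by
          rw [hu, orderOf_pow, hordf]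
          have hdvd' : n / p ∣ n := Nat.div_dvd_of_dvd hdvd
          rw [Nat.gcd_eq_right hdvd']
          exact Nat.div_div_self hdvd hn0
        have hune : u ≠ 1 := by
          intro h1
          rw [h1, orderOf_one] at hordu
          exact hp.one_lt.ne' hordu.symm
        -- find a nontrivial coordinate
        have : ∃ q, u q ≠ 1 := by
          by_contra hall
          push_neg at hall
          exact hune (funext hall)
        obtain ⟨q, hq⟩ := this
        have : ∃ P, u q P ≠ 1 := by
          by_contra hall
          push_neg at hall
          exact hq (funext hall)
        obtain ⟨P, hP⟩ := this
        set v := u q P with hv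
        have hvord : orderOf v ∣ p := by
          rw [← hordu]
          calc orderOf v ∣ orderOf (u q) := orderOf_map_dvd (Pi.evalMonoidHom _ P) (u q)
            _ ∣ orderOf u := orderOf_map_dvd (Pi.evalMonoidHom _ q) u
        have hvp : orderOf v = p := by
          rcases (Nat.dvd_prime hp).mp hvord with h1 | h1
          · exact absurd (orderOf_eq_one_iff.mp h1) hP
          · exact h1
        -- v is in a q-group, so q = p
        obtain ⟨s, hs⟩ := P.isPGroup' v
        have hqp : (q : ℕ) = p := by
          have hvdvd : orderOf v ∣ (q : ℕ) ^ s := orderOf_dvd_of_pow_eq_one hs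
          rw [hvp] at hvdvd
          have hq' : (q : ℕ).Prime := Nat.prime_of_mem_primeFactors q.2
          obtain ⟨j, hj, hjeq⟩ := (Nat.dvd_prime_pow hq').mp hvdvd
          rcases Nat.eq_zero_or_pos j with h0 | hpos
          · rw [h0, pow_zero] at hjeq
            exact absurd hjeq hp.one_lt.ne'
          · have hqdvd : (q : ℕ) ∣ p := hjeq ▸ dvd_pow_self (q : ℕ) hpos.ne'
            exact (Nat.prime_dvd_prime_iff_eq hq' hp).mp hqdvd
        -- but the p-coordinate of f is 1
        have hfp : f ⟨p, hmem⟩ = 1 := hw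
        have : u q = 1 := by
          have hqeq : q = (⟨p, hmem⟩ : (Nat.card N).primeFactors) := Subtype.ext hqp
          rw [hu, hqeq]
          show (f ^ (n / p)) ⟨p, hmem⟩ = 1
          rw [Pi.pow_apply, hfp, one_pow]
        exact hP (by show u q P = 1; rw [this]; rfl)
      · intro hnd
        show φ w = 1
        have h1 : orderOf (φ w) ∣ orderOf w := orderOf_map_dvd φ w
        obtain ⟨j, hj⟩ := htarget (φ w)
        have h2 : orderOf (φ w) ∣ p ^ j := orderOf_dvd_of_pow_eq_one hj
        obtain ⟨i, hi, hieq⟩ := (Nat.dvd_prime_pow hp).mp h2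
        rcases Nat.eq_zero_or_pos i with h0 | hpos
        · rw [h0, pow_zero] at hieq
          exact orderOf_eq_one_iff.mp hieq
        · exfalso
          apply hnd
          calc p ∣ p ^ i := dvd_pow_self p hpos.ne'
            _ = orderOf (φ w) := hieq.symm
            _ ∣ orderOf w := h1
    · have e2 : (N ⧸ φ.ker) ≃* φ.range := QuotientGroup.quotientKerEquivRange φ
      exact (htarget.to_subgroup φ.range).of_equiv e2.symm
  · refine ⟨⊤, inferInstance, ?_, ?_⟩
    · intro w
      simp only [Subgroup.mem_top, true_iff]
      intro hdvd
      exact hpN (hdvd.trans (orderOf_dvd_natCard w))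
    · haveI := QuotientGroup.subsingleton_quotient_top (G := N)
      exact IsPGroup.of_card (by rw [Nat.card_of_subsingleton (1 : N ⧸ (⊤ : Subgroup N)), pow_zero]; )

end Helpers5


open scoped Pointwise

set_option maxHeartbeats 1000000 in
theorem stmt_8 [Group G] [Finite G] [Group.IsSolvable G]
    (hG : ¬ Group.IsNilpotent G)
    (h : ∀ x : G, (∃ q k : ℕ, q.Prime ∧ orderOf x = q ^ k) →
      NSubnormal (Subgroup.zpowers x) ∨ NAbnormal (Subgroup.zpowers x)) :
    ∃ (p : ℕ) (x : G), p.Prime ∧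
      (∃ P : Sylow p G, (P : Subgroup G) = Subgroup.zpowers x) ∧
      NAbnormal (Subgroup.zpowers x) ∧
      commutator G ⊔ Subgroup.zpowers x = ⊤ ∧
      commutator G ⊓ Subgroup.zpowers x = ⊥ ∧
      IsNilpotentResidual (commutator G) ∧
      Group.IsNilpotent ↥(commutator G ⊔ Subgroup.zpowers (x ^ p)) := by
  haveI : Nontrivial G := by
    rcases subsingleton_or_nontrivial G with hsub | hnt
    · exact absurd (by infer_instance) hG
    · exact hnt
  -- Step 1: there is an N-abnormal primary cyclic subgroup
  have hNSchain : ∀ y : G, NSubnormal (Subgroup.zpowers y) →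
      ∃ n, SubnChain n (Subgroup.zpowers y) ⊤ := by
    intro y hy
    rcases hy with htop | ⟨n, c, h0, hl, hsteps⟩
    · exact ⟨0, htop⟩
    · refine ⟨n, ?_⟩
      have := subnChain_of_chain n c (fun i => hsteps i)
      rwa [h0, hl] at this
  have hex : ∃ x : G, (∃ q k : ℕ, q.Prime ∧ orderOf x = q ^ k) ∧
      NAbnormal (Subgroup.zpowers x) := by
    by_contra hno
    push_neg at hno
    apply hG
    have hnil : Group.IsNilpotent ↥(⊤ : Subgroup G) := by
      apply crit ⊤ inferInstance
      intro y _ hyp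
      rcases h y hyp with hs | ha
      · exact hNSchain y hs
      · exact absurd ha (hno y hyp)
    exact nilpotent_of_mulEquiv (Subgroup.topEquiv (G := G))
  obtain ⟨x, ⟨p, k, hp, hord⟩, hab⟩ := hex
  haveI := Fact.mk hp
  have hDnormal : (commutator G).Normal := normal_of_commutator_le le_rfl
  have hDnilp : Group.IsNilpotent (G ⧸ commutator G) :=
    quot_nilpotent_of_commutator_le hDnormal le_rfl
  have hsup : Subgroup.zpowers x ⊔ commutator G = ⊤ := hab.sup_eq_top hDnormal hDnilp
  have hsup' : commutator G ⊔ Subgroup.zpowers x = ⊤ := by rw [sup_comm]; exact hsup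
  have hDne : commutator G ≠ ⊤ := commutator_ne_top
  set M := commutator G ⊔ Subgroup.zpowers (x ^ p) with hMdef
  have hDM : commutator G ≤ M := le_sup_left
  have hMnormal : M.Normal := normal_of_commutator_le hDM
  have hxpM : x ^ p ∈ M :=
    (le_sup_right : Subgroup.zpowers (x ^ p) ≤ M) (Subgroup.mem_zpowers (x ^ p))
  -- x ∉ M
  have hxM : x ∉ M := by
    intro hx
    set φ := QuotientGroup.mk' (commutator G) with hφdef
    have hgen : Subgroup.zpowers (φ x) = ⊤ := zpowers_image_top hDnormal hsup
    have hximg : φ x ∈ Subgroup.zpowers (φ x ^ p) := by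
      have h1 : φ x ∈ Subgroup.map φ M := ⟨x, hx, rfl⟩
      rw [hMdef, Subgroup.map_sup, MonoidHom.map_zpowers] at h1
      have hcomm : Subgroup.map φ (commutator G) = ⊥ := by
        rw [eq_bot_iff]
        rintro _ ⟨m, hm, rfl⟩
        rw [Subgroup.mem_bot]
        exact (QuotientGroup.eq_one_iff m).2 hm
      rw [hcomm, bot_sup_eq] at h1
      rwa [map_pow] at h1
    obtain ⟨t, ht⟩ := Subgroup.mem_zpowers_iff.mp hximg
    have hone : φ x = 1 := by
      have hdvd : orderOf (φ x) ∣ p ^ k := hord ▸ orderOf_map_dvd φ x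
      obtain ⟨j, _, hjeq⟩ := (Nat.dvd_prime_pow hp).mp hdvd
      rcases Nat.eq_zero_or_pos j with h0 | hpos
      · rw [h0, pow_zero] at hjeq
        exact orderOf_eq_one_iff.mp hjeq
      · exfalso
        have hzp : (φ x) ^ ((p : ℤ) * t) = (φ x) ^ (1 : ℤ) := by
          rw [zpow_one, zpow_mul, zpow_natCast, ht]
        have hdvd2 : (orderOf (φ x) : ℤ) ∣ (p : ℤ) * t - 1 :=
          orderOf_dvd_sub_iff_zpow_eq_zpow.mpr hzp
        have hpdvd : (p : ℤ) ∣ (p : ℤ) * t - 1 := by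
          refine dvd_trans ?_ hdvd2
          rw [hjeq]
          exact_mod_cast dvd_pow_self (p : ℤ) hpos.ne'
        have hpone : (p : ℤ) ∣ 1 := by
          have h2 : (p : ℤ) ∣ (p : ℤ) * t := Dvd.intro t rfl
          have := dvd_sub h2 hpdvd
          simpa using this
        have : p ∣ 1 := by exact_mod_cast hpone
        exact hp.one_lt.ne' (Nat.dvd_one.mp this)
    apply hDne
    rw [eq_top_iff]
    intro g _
    have hg : φ g ∈ Subgroup.zpowers (φ x) := by rw [hgen]; trivial
    obtain ⟨s, hs⟩ := Subgroup.mem_zpowers_iff.mp hg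
    rw [hone, one_zpow] at hs
    exact (QuotientGroup.eq_one_iff g).mp hs.symm
  -- M is a maximal subgroup
  have hMmax : IsMaximalSubgroupOf M ⊤ := by
    constructor
    · exact lt_top_iff_ne_top.2 (fun heq => hxM (heq ▸ Subgroup.mem_top x))
    · intro S hMS _
      obtain ⟨g, hgS, hgM⟩ := SetLike.exists_of_lt hMS
      have hgdec : g ∈ (commutator G : Set G) * (Subgroup.zpowers x : Set G) := by
        rw [← Subgroup.normal_mul, hsup']
        trivial
      obtain ⟨c, hc, w, hw, rfl⟩ := hgdec
      obtain ⟨t, rfl⟩ := Subgroup.mem_zpowers_iff.mp hw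
      by_cases hpt : (p : ℤ) ∣ t
      · exfalso
        obtain ⟨s, rfl⟩ := hpt
        apply hgM
        have hxs : x ^ ((p : ℤ) * s) ∈ M := by
          rw [zpow_mul, zpow_natCast]
          exact Subgroup.zpowers_le.2 hxpM (Subgroup.mem_zpowers_iff.mpr ⟨s, rfl⟩)
        exact mul_mem (hDM hc) hxs
      · -- t coprime to p, hence x ∈ S and S = ⊤
        have hcop : IsCoprime ((p : ℤ) ^ k) t :=
          IsCoprime.pow_left ((Nat.prime_iff_prime_int.mp hp).coprime_iff_not_dvd.mpr hpt)
        obtain ⟨a, b, hab2⟩ := hcop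
        have hxt : x ^ t ∈ S := by
          have heq : x ^ t = c⁻¹ * (c * x ^ t) := by group
          rw [heq]
          exact mul_mem (inv_mem (hMS.le (hDM hc))) hgS
        have hxpk : x ^ ((p : ℤ) ^ k) = 1 := by
          have h1 : x ^ (p ^ k) = 1 := hord ▸ pow_orderOf_eq_one x
          rw [show ((p : ℤ) ^ k) = ((p ^ k : ℕ) : ℤ) by push_cast; ring, zpow_natCast]
          exact h1
        have hxS : x ∈ S := by
          have hx1 : (x ^ ((p : ℤ) ^ k)) ^ a * (x ^ t) ^ b = x := by
            rw [← zpow_mul, ← zpow_mul, ← zpow_add]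
            have h2 : ((p : ℤ) ^ k) * a + t * b = 1 := by
              rw [mul_comm ((p : ℤ) ^ k) a, mul_comm t b]
              exact hab2
            rw [h2, zpow_one]
          rw [← hx1, hxpk, one_zpow, one_mul]
          exact zpow_mem hxt b
        rw [eq_top_iff, ← hsup']
        exact sup_le (le_trans hDM hMS.le) (Subgroup.zpowers_le.2 hxS)
  have hMq : Group.IsNilpotent (G ⧸ M) := quot_nilpotent_of_commutator_le hMnormal hDM
  -- M is nilpotent
  have hMnilp : Group.IsNilpotent ↥M := by
    apply crit M hMnormal
    intro y hy hyp
    rcases h y hyp with hs | ha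
    · exact hNSchain y hs
    · exact absurd (nilpQuotByCore_top le_rfl hMnormal hMq)
        (ha M ⊤ (Subgroup.zpowers_le.2 hy) hMmax)
  -- the p'-part of M
  obtain ⟨W, hWnorm, hWchar, hWquot⟩ := exists_pprime_part ↥M p hp hMnilp
  set W' := W.map M.subtype with hW'def
  have hchar' : ∀ g : G, g ∈ W' ↔ g ∈ M ∧ ¬ p ∣ orderOf g := by
    intro g
    constructor
    · rintro ⟨w, hw, rfl⟩
      refine ⟨w.2, ?_⟩
      rw [show (M.subtype w : G) = (w : G) from rfl, Subgroup.orderOf_coe w]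
      exact (hWchar w).1 hw
    · rintro ⟨hgM, hgord⟩
      refine ⟨⟨g, hgM⟩, (hWchar _).2 ?_, rfl⟩
      rw [← Subgroup.orderOf_coe (⟨g, hgM⟩ : ↥M)]
      exact hgord
  have hW'normal : W'.Normal := by
    constructor
    intro n hn g
    rw [hchar'] at hn ⊢
    refine ⟨hMnormal.conj_mem n hn.1 g, ?_⟩
    have horda : orderOf (g * n * g⁻¹) = orderOf n := by
      have := orderOf_injective (MulAut.conj g).toMonoidHom (MulEquiv.injective _) n
      simpa [MulAut.conj_apply] using this
    rw [horda]
    exact hn.2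
  -- G/W' is a p-group, hence nilpotent
  have hquotnil : Group.IsNilpotent (G ⧸ W') := by
    haveI := hW'normal
    -- card (G / M) divides p
    have hcard1 : Nat.card (G ⧸ M) ∣ p := by
      set ψ := QuotientGroup.mk' M with hψdef
      have hsupM : Subgroup.zpowers x ⊔ M = ⊤ := by
        rw [eq_top_iff, ← hsup]
        exact sup_le_sup_left hDM _
      have hgen : Subgroup.zpowers (ψ x) = ⊤ := zpowers_image_top hMnormal hsupM
      have hxp1 : (ψ x) ^ p = 1 := by
        rw [← map_pow]
        exact (QuotientGroup.eq_one_iff _).2 hxpM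
      have hordx : orderOf (ψ x) ∣ p := orderOf_dvd_of_pow_eq_one hxp1
      calc Nat.card (G ⧸ M) = Nat.card (⊤ : Subgroup (G ⧸ M)) := Subgroup.card_top.symm
        _ = Nat.card (Subgroup.zpowers (ψ x)) := by rw [hgen]
        _ = orderOf (ψ x) := Nat.card_zpowers _
        _ ∣ p := hordx
    obtain ⟨a, ha⟩ := IsPGroup.iff_card.mp hWquot
    have hcardW : Nat.card W' = Nat.card W :=
      (Nat.card_congr (Subgroup.equivMapOfInjective W M.subtype M.subtype_injective).toEquiv).symm
    have e1 : Nat.card G = Nat.card (G ⧸ W') * Nat.card W' :=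
      Subgroup.card_eq_card_quotient_mul_card_subgroup W'
    have e2 : Nat.card G = Nat.card (G ⧸ M) * Nat.card ↥M :=
      Subgroup.card_eq_card_quotient_mul_card_subgroup M
    have e3 : Nat.card ↥M = Nat.card (↥M ⧸ W) * Nat.card W :=
      Subgroup.card_eq_card_quotient_mul_card_subgroup W
    have hWpos : 0 < Nat.card W := Nat.card_pos
    have hW'pos : 0 < Nat.card ↥W' := Nat.card_pos
    have hkey : Nat.card (G ⧸ W') = Nat.card (G ⧸ M) * Nat.card (↥M ⧸ W) := by
      have h4 : Nat.card (G ⧸ W') * Nat.card ↥W' =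
          (Nat.card (G ⧸ M) * Nat.card (↥M ⧸ W)) * Nat.card ↥W' := by
        rw [← e1, e2, e3, hcardW]
        ring
      exact Nat.eq_of_mul_eq_mul_right hW'pos h4
    have hdvd : Nat.card (G ⧸ W') ∣ p ^ (a + 1) := by
      rw [hkey, ha, pow_succ, Nat.mul_comm (p ^ a) p]
      exact Nat.mul_dvd_mul hcard1 dvd_rfl
    obtain ⟨b, _, hbeq⟩ := (Nat.dvd_prime_pow hp).mp hdvd
    have : IsPGroup p (G ⧸ W') := IsPGroup.of_card hbeq
    exact this.isNilpotent
  have hDW : commutator G ≤ W' := hab.commutator_le hW'normal hquotnil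
  -- final inf = bot
  have hinf : commutator G ⊓ Subgroup.zpowers x = ⊥ := by
    rw [eq_bot_iff]
    intro g hg
    obtain ⟨hgc, hgz⟩ := hg
    have h1 : orderOf g ∣ p ^ k := hord ▸ orderOf_dvd_of_mem_zpowers hgz
    have h2 : ¬ p ∣ orderOf g := ((hchar' g).1 (hDW hgc)).2
    obtain ⟨j, _, hjeq⟩ := (Nat.dvd_prime_pow hp).mp h1
    rcases Nat.eq_zero_or_pos j with h0 | hpos
    · rw [h0, pow_zero] at hjeq
      rw [Subgroup.mem_bot]
      exact orderOf_eq_one_iff.mp hjeq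
    · exact absurd (hjeq ▸ dvd_pow_self p hpos.ne') h2
  exact ⟨p, x, hp, hab.sylow hp hord, hab, hsup',
    hinf,
    ⟨hDnormal, hDnilp, fun M' hM' hq' => hab.commutator_le hM' hq'⟩,
    hMnilp⟩
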